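/- Let 𝒴 be a nonempty finite set and let M ≥ 2^{|𝒴|} be an integer. For any probability mass functions μ_1, …, μ_M on 𝒴 and any subsets D_1, …, D_M ⊆ 𝒴, one has max_{1≤i≤M} μ_i(𝒴 \ D_i) + max_{1≤i≠j≤M} μ_i(D_j) ≥ 1. (Applied with 𝒴 = (Fin q)^{nl}, μ_i the output distribution of message i, and D_i the decoding sets, this shows that any identification-feedback code for the q-ary uniform permutation channel over l blocks of length n with 2^{q^{nl}} messages has λ_1 + λ_2 ≥ 1.) -/

import Mathlib

open Finset

/-- `μ` is a probability mass function on a finite type. -/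
def IsPMF {α : Type*} [Fintype α] (μ : α → ℝ) : Prop :=
  (∀ a, 0 ≤ μ a) ∧ ∑ a, μ a = 1

/-- If a nonempty finite set `𝒴` carries `M ≥ 2^|𝒴|` pmfs `μ_1, …, μ_M` and decoding sets
`D_1, …, D_M ⊆ 𝒴`, then `max_i μ_i(𝒴 \ D_i) + max_{i≠j} μ_i(D_j) ≥ 1`. -/
theorem idFeedbackConverse {Y : Type*} [Fintype Y] [DecidableEq Y] [Nonempty Y]
    (M : ℕ) (hM : 2 ^ Fintype.card Y ≤ M)
    (μ : Fin M → Y → ℝ) (hμ : ∀ i, IsPMF (μ i))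
    (D : Fin M → Finset Y) :
    1 ≤ (⨆ i, ∑ y ∈ Finset.univ \ D i, μ i y) +
        (⨆ i, ⨆ j, ⨆ (_ : i ≠ j), ∑ y ∈ D j, μ i y) := by
  have hMpos : 0 < M := lt_of_lt_of_le (Nat.two_pow_pos _) hM
  haveI : Nonempty (Fin M) := ⟨⟨0, hMpos⟩⟩
  set f : Fin M → ℝ := fun i => ∑ y ∈ Finset.univ \ D i, μ i y with hf
  set g : Fin M → Fin M → ℝ := fun i j => ⨆ (_ : i ≠ j), ∑ y ∈ D j, μ i y with hg
  have hbdd1 : BddAbove (Set.range f) := Set.Finite.bddAbove (Set.finite_range f)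
  have hbdd2 : ∀ i, BddAbove (Set.range (g i)) := fun i =>
    Set.Finite.bddAbove (Set.finite_range _)
  have hbdd3 : BddAbove (Set.range fun i => ⨆ j, g i j) :=
    Set.Finite.bddAbove (Set.finite_range _)
  by_cases hinj : Function.Injective D
  · -- all decoding sets distinct: D is bijective, so some D i = ∅
    have hcard : Fintype.card (Fin M) ≤ Fintype.card (Finset Y) :=
      Fintype.card_le_of_injective D hinj
    have hMeq : Fintype.card (Fin M) = Fintype.card (Finset Y) := by
      have : M = 2 ^ Fintype.card Y :=
        le_antisymm (by simpa [Fintype.card_finset] using hcard) hM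
      simp [Fintype.card_finset, this]
    have hbij : Function.Bijective D :=
      (Fintype.bijective_iff_injective_and_card D).2 ⟨hinj, hMeq⟩
    obtain ⟨i, hi⟩ := hbij.2 (∅ : Finset Y)
    have h1 : f i = 1 := by simp [hf, hi, (hμ i).2]
    have hl1 : (1 : ℝ) ≤ ⨆ i, f i := h1 ▸ le_ciSup hbdd1 i
    obtain ⟨i0⟩ := ‹Nonempty (Fin M)›
    have hg0 : g i0 i0 = 0 := by
      haveI : IsEmpty (i0 ≠ i0) := ⟨fun h => h rfl⟩
      simp [hg, iSup_of_empty', Real.sSup_empty]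
    have hl2 : (0 : ℝ) ≤ ⨆ i, ⨆ j, g i j :=
      calc (0 : ℝ) = g i0 i0 := hg0.symm
        _ ≤ ⨆ j, g i0 j := le_ciSup (hbdd2 i0) i0
        _ ≤ ⨆ i, ⨆ j, g i j := le_ciSup hbdd3 i0
    linarith
  · -- two equal decoding sets
    rw [Function.Injective] at hinj
    push_neg at hinj
    obtain ⟨a, b, hDab, hab⟩ := hinj
    have hsum : f a + ∑ y ∈ D b, μ a y = 1 := by
      rw [hf]
      simp only
      rw [hDab, Finset.sum_sdiff (Finset.subset_univ (D b))]
      exact (hμ a).2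
    have hgab : g a b = ∑ y ∈ D b, μ a y := by
      simp [hg, ciSup_pos hab]
    have h1 : f a ≤ ⨆ i, f i := le_ciSup hbdd1 a
    have h2 : g a b ≤ ⨆ j, g a j := le_ciSup (hbdd2 a) b
    have h3 : (⨆ j, g a j) ≤ ⨆ i, ⨆ j, g i j := le_ciSup hbdd3 a
    linarith
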